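/- Let F be a field and let W be the Weierstrass curve y² = x³ + a x² + b x over F (i.e. Weierstrass coefficients a₁ = a₃ = a₆ = 0, a₂ = a, a₄ = b) with nonzero discriminant. Then T = (0, 0) is an affine point of W, and for every affine point P = (x₀, y₀) of W with x₀ ≠ 0, the group-law sum T + P is the affine point (b/x₀, −b y₀/x₀²). (This shows the involution ι(x, z) = (16y⁵/x, −16y⁵z/x²) on the fibres of the elliptic fibration is translation by the 2-torsion section, i.e. a van Geemen–Sarti involution, with b = 16y⁵.) -/

import Mathlib

open WeierstrassCurve

open Classical in
/-- On the Weierstrass curve `y² = x³ + ax² + bx` with nonzero discriminant, `T = (0, 0)` is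
an affine point, and for any affine point `P = (x₀, y₀)` with `x₀ ≠ 0`, the group-law sum
`T + P` is the affine point `(b/x₀, −by₀/x₀²)`. -/
theorem stmt_6 {F : Type*} [Field F] (a b : F)
    (W : WeierstrassCurve.Affine F)
    (hW : W = { a₁ := 0, a₂ := a, a₃ := 0, a₄ := b, a₆ := 0 })
    (hΔ : W.Δ ≠ 0)
    (x₀ y₀ : F) (hx₀ : x₀ ≠ 0) (hP : W.Nonsingular x₀ y₀) :
    ∃ (hT : W.Nonsingular 0 0) (hQ : W.Nonsingular (b / x₀) (-b * y₀ / x₀ ^ 2)),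
      Affine.Point.some _ _ hT + Affine.Point.some _ _ hP = Affine.Point.some _ _ hQ := by
  have ha₁ : W.a₁ = 0 := by rw [hW]
  have ha₂ : W.a₂ = a := by rw [hW]
  have ha₃ : W.a₃ = 0 := by rw [hW]
  have ha₄ : W.a₄ = b := by rw [hW]
  have ha₆ : W.a₆ = 0 := by rw [hW]
  have heq : y₀ ^ 2 = x₀ ^ 3 + a * x₀ ^ 2 + b * x₀ := by
    have := hP.1
    rw [Affine.equation_iff, ha₁, ha₂, ha₃, ha₄, ha₆] at this
    linear_combination this
  have hb : b ≠ 0 := by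
    intro h
    apply hΔ
    simp only [WeierstrassCurve.Δ, WeierstrassCurve.b₂, WeierstrassCurve.b₄,
      WeierstrassCurve.b₆, WeierstrassCurve.b₈, ha₁, ha₂, ha₃, ha₄, ha₆, h]
    ring
  have hT : W.Nonsingular 0 0 := by
    rw [Affine.nonsingular_iff']
    constructor
    · rw [Affine.equation_iff]
      simp [ha₆]
    · left
      simp only [ha₁, ha₂, ha₄]
      simpa using neg_ne_zero.mpr hb
  have hx : (0 : F) ≠ x₀ := Ne.symm hx₀
  have hs : W.slope 0 x₀ 0 y₀ = y₀ / x₀ := by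
    rw [Affine.slope_of_X_ne hx]
    rw [zero_sub, zero_sub, neg_div_neg_eq]
  have hX : W.addX 0 x₀ (W.slope 0 x₀ 0 y₀) = b / x₀ := by
    rw [hs, Affine.addX, ha₁, ha₂]
    field_simp
    linear_combination heq
  have hY : W.addY 0 x₀ 0 (W.slope 0 x₀ 0 y₀) = -b * y₀ / x₀ ^ 2 := by
    rw [Affine.addY, Affine.negY, Affine.negAddY, hX, hs, ha₁, ha₃]
    field_simp
    ring
  have key : ∀ {x y x' y' : F} (_ : x = x') (_ : y = y') (h : W.Nonsingular x y),
      ∃ h' : W.Nonsingular x' y', Affine.Point.some _ _ h = Affine.Point.some _ _ h' := by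
    rintro x y _ _ rfl rfl h
    exact ⟨h, rfl⟩
  obtain ⟨hQ, hQeq⟩ := key hX hY
    (Affine.nonsingular_add hT hP fun h => absurd h.1 hx)
  exact ⟨hT, hQ, by rw [Affine.Point.add_of_X_ne hx, hQeq]⟩
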